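/- (I/O passivity lemma) Let Σ_i: L²_e → L²_e, i=1,...,M, satisfy ‖(y_i)_T‖² ≤ γ_i ⟨(y_i)_T,(u_i)_T⟩ for all T>0 with γ_i>0, and let the interconnection be u = v + A y for an M×M real matrix A. Set E = A − Γ where Γ = diag(1/γ_1,...,1/γ_M). If there exists a positive diagonal matrix D with DE + EᵀD negative definite, then there exists ρ>0 such that for all u, v, y satisfying the passivity inequalities and u=v+Ay, one has ‖y_T‖ ≤ ρ ‖v_T‖ for all T>0. -/

import Mathlib

open Matrix MeasureTheory

lemma abs_integral_mul_le {μ : Measure ℝ} {f g : ℝ → ℝ}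
    (hf : Integrable (fun t => f t ^ 2) μ) (hg : Integrable (fun t => g t ^ 2) μ)
    (hfg : Integrable (fun t => f t * g t) μ) :
    |∫ t, f t * g t ∂μ| ≤ Real.sqrt (∫ t, f t ^ 2 ∂μ) * Real.sqrt (∫ t, g t ^ 2 ∂μ) := by
  set a := ∫ t, g t ^ 2 ∂μ with ha'
  set b := ∫ t, f t * g t ∂μ with hb'
  set c := ∫ t, f t ^ 2 ∂μ with hc'
  have ha : 0 ≤ a := integral_nonneg fun t => sq_nonneg _
  have hc : 0 ≤ c := integral_nonneg fun t => sq_nonneg _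
  have key : ∀ lam : ℝ, 0 ≤ a * (lam * lam) + (-2 * b) * lam + c := by
    intro lam
    have h0 : 0 ≤ ∫ t, (f t - lam * g t) ^ 2 ∂μ := integral_nonneg fun t => sq_nonneg _
    have hexp : (fun t => (f t - lam * g t) ^ 2)
        = fun t => (f t ^ 2 - (2 * lam) * (f t * g t)) + lam ^ 2 * g t ^ 2 := by
      funext t; ring
    have h1 : Integrable (fun t => f t ^ 2 - 2 * lam * (f t * g t)) μ :=
      hf.sub (hfg.const_mul _)
    have h2 : Integrable (fun t => lam ^ 2 * g t ^ 2) μ := hg.const_mul _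
    have h3 : Integrable (fun t => 2 * lam * (f t * g t)) μ := hfg.const_mul _
    rw [hexp, integral_add h1 h2, integral_sub hf h3, MeasureTheory.integral_const_mul,
      MeasureTheory.integral_const_mul] at h0
    nlinarith [h0]
  have hdisc := discrim_le_zero key
  rw [discrim] at hdisc
  have hb2 : b ^ 2 ≤ c * a := by nlinarith [hdisc]
  calc |b| = Real.sqrt (b ^ 2) := (Real.sqrt_sq_eq_abs b).symm
    _ ≤ Real.sqrt (c * a) := Real.sqrt_le_sqrt hb2
    _ = Real.sqrt c * Real.sqrt a := Real.sqrt_mul hc a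

lemma quad_bound (M : ℕ) (B : Matrix (Fin M) (Fin M) ℝ)
    (hB : ∀ x : Fin M → ℝ, x ≠ 0 → x ⬝ᵥ B.mulVec x < 0) :
    ∃ α > 0, ∀ x : Fin M → ℝ, x ⬝ᵥ B.mulVec x ≤ -α * ∑ i, (x i) ^ 2 := by
  rcases Nat.eq_zero_or_pos M with hM | hM
  · subst hM
    exact ⟨1, one_pos, fun x => by simp [dotProduct]⟩
  · let Q : EuclideanSpace ℝ (Fin M) → ℝ := fun x => x ⬝ᵥ B.mulVec x
    have hQc : Continuous Q := by
      have h1 : Continuous fun x : Fin M → ℝ => x ⬝ᵥ B.mulVec x := by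
        simp only [dotProduct, Matrix.mulVec]
        exact continuous_finset_sum _ fun i _ => (continuous_apply i).mul
          (continuous_finset_sum _ fun j _ => continuous_const.mul (continuous_apply j))
      exact h1.comp (PiLp.continuousLinearEquiv 2 ℝ _).continuous
    have i0 : Fin M := ⟨0, hM⟩
    have hsne : (Metric.sphere (0 : EuclideanSpace ℝ (Fin M)) 1).Nonempty := by
      refine ⟨EuclideanSpace.single i0 (1 : ℝ), ?_⟩
      simp [mem_sphere_zero_iff_norm, EuclideanSpace.norm_single]
    obtain ⟨x0, hx0s, hx0m⟩ :=
      (isCompact_sphere (0 : EuclideanSpace ℝ (Fin M)) 1).exists_isMaxOn hsne hQc.continuousOn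
    have hx0n : ‖x0‖ = 1 := mem_sphere_zero_iff_norm.mp hx0s
    have hx0ne : x0 ≠ 0 := by intro h; rw [h] at hx0n; simp at hx0n
    have hQ0 : Q x0 < 0 := hB x0 (by
      intro h
      exact hx0ne (WithLp.ofLp_injective 2 h))
    refine ⟨-(Q x0), by linarith, ?_⟩
    intro x
    by_cases hx : x = 0
    · subst hx; simp
    · have hex : ∃ i, x i ≠ 0 := by
        by_contra h; push_neg at h; exact hx (funext h)
      obtain ⟨iw, hiw⟩ := hex
      have hsumpos : 0 < ∑ i, (x i) ^ 2 :=
        Finset.sum_pos' (fun i _ => sq_nonneg _) ⟨iw, Finset.mem_univ iw, by positivity⟩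
      set s := Real.sqrt (∑ i, (x i) ^ 2) with hs'
      have hspos : 0 < s := Real.sqrt_pos.mpr hsumpos
      have hs2 : s ^ 2 = ∑ i, (x i) ^ 2 := Real.sq_sqrt hsumpos.le
      set uu : Fin M → ℝ := fun i => s⁻¹ * x i with huu'
      have hx_eq : x = s • uu := by
        funext i; simp [huu', smul_eq_mul]; field_simp
      have hus : ∑ i, (uu i) ^ 2 = 1 := by
        simp only [huu', mul_pow, ← Finset.mul_sum]
        rw [← hs2]; field_simp
      have humem : (WithLp.toLp 2 uu) ∈ Metric.sphere (0 : EuclideanSpace ℝ (Fin M)) 1 := by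
        rw [mem_sphere_zero_iff_norm, EuclideanSpace.norm_eq]
        simp only [Real.norm_eq_abs, sq_abs, PiLp.toLp_apply]
        rw [hus]; exact Real.sqrt_one
      have hQu : Q (WithLp.toLp 2 uu) ≤ Q x0 := hx0m humem
      have hcalc : x ⬝ᵥ B.mulVec x = s ^ 2 * (uu ⬝ᵥ B.mulVec uu) := by
        rw [hx_eq, Matrix.mulVec_smul, smul_dotProduct, dotProduct_smul,
          smul_eq_mul, smul_eq_mul]
        ring
      have : uu ⬝ᵥ B.mulVec uu ≤ Q x0 := hQu
      rw [hcalc]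
      nlinarith [hs2, sq_nonneg s]


def NegDefQ {n : Type*} [Fintype n] (M : Matrix n n ℝ) : Prop :=
  ∀ x : n → ℝ, x ≠ 0 → x ⬝ᵥ M.mulVec x < 0

theorem io_passivity_lemma (M : ℕ) (γ : Fin M → ℝ) (hγ : ∀ i, 0 < γ i)
    (A : Matrix (Fin M) (Fin M) ℝ)
    (E : Matrix (Fin M) (Fin M) ℝ)
    (hE : E = A - Matrix.diagonal fun i => (γ i)⁻¹)
    (d : Fin M → ℝ) (hd : ∀ i, 0 < d i)
    (hdiag : NegDefQ (Matrix.diagonal d * E + Eᵀ * Matrix.diagonal d)) :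
    ∃ ρ > 0, ∀ u v y : Fin M → ℝ → ℝ,
      -- membership in L²_e : squares and cross products locally integrable
      (∀ i (T : ℝ), IntegrableOn (fun t => (y i t) ^ 2) (Set.Ioc 0 T)) →
      (∀ i (T : ℝ), IntegrableOn (fun t => (v i t) ^ 2) (Set.Ioc 0 T)) →
      (∀ i (T : ℝ), IntegrableOn (fun t => y i t * u i t) (Set.Ioc 0 T)) →
      (∀ i (T : ℝ), IntegrableOn (fun t => y i t * v i t) (Set.Ioc 0 T)) →
      -- strict passivity of each subsystem
      (∀ i (T : ℝ), 0 < T →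
        (∫ t in Set.Ioc 0 T, (y i t) ^ 2) ≤
          γ i * ∫ t in Set.Ioc 0 T, y i t * u i t) →
      -- interconnection u = v + A y
      (∀ i t, u i t = v i t + ∑ j, A i j * y j t) →
      ∀ T : ℝ, 0 < T →
        Real.sqrt (∫ t in Set.Ioc 0 T, ∑ i, (y i t) ^ 2) ≤
          ρ * Real.sqrt (∫ t in Set.Ioc 0 T, ∑ i, (v i t) ^ 2) := by
  classical
  set B : Matrix (Fin M) (Fin M) ℝ := Matrix.diagonal d * E with hBdef
  have hBapp : ∀ i j, B i j = d i * E i j := by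
    intro i j
    simp [hBdef, Matrix.mul_apply, Matrix.diagonal_apply, ite_mul, Finset.sum_ite_eq]
  have hBneg : ∀ x : Fin M → ℝ, x ≠ 0 → x ⬝ᵥ B.mulVec x < 0 := by
    intro x hx
    have h := hdiag x hx
    rw [Matrix.add_mulVec, dotProduct_add] at h
    have heq : x ⬝ᵥ (Eᵀ * Matrix.diagonal d).mulVec x = x ⬝ᵥ B.mulVec x := by
      have h1 : Eᵀ * Matrix.diagonal d = Bᵀ := by
        rw [hBdef, Matrix.transpose_mul, Matrix.diagonal_transpose]
      rw [h1, Matrix.dotProduct_mulVec, Matrix.vecMul_transpose, dotProduct_comm]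
    rw [heq] at h
    linarith
  obtain ⟨α, hα, hQ⟩ := quad_bound M B hBneg
  set D0 : ℝ := 1 + ∑ i, d i with hD0def
  have hD0pos : 0 < D0 := by
    have : 0 ≤ ∑ i, d i := Finset.sum_nonneg fun i _ => (hd i).le
    simp only [hD0def]; linarith
  have hdle : ∀ i, d i ≤ D0 := by
    intro i
    have : d i ≤ ∑ j, d j :=
      Finset.single_le_sum (fun j _ => (hd j).le) (Finset.mem_univ i)
    simp only [hD0def]; linarith
  refine ⟨D0 / α, by positivity, ?_⟩
  intro u v y hy2 hv2 hyu hyv hpass hu T hT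
  set a : Fin M → ℝ := fun i => ∫ t in Set.Ioc 0 T, (y i t) ^ 2 with ha'
  set b : Fin M → ℝ := fun i => ∫ t in Set.Ioc 0 T, y i t * v i t with hb'
  set c : Fin M → ℝ := fun i => ∫ t in Set.Ioc 0 T, (v i t) ^ 2 with hc'
  have haN : ∀ i, 0 ≤ a i := fun i => integral_nonneg fun t => sq_nonneg _
  have hcN : ∀ i, 0 ≤ c i := fun i => integral_nonneg fun t => sq_nonneg _
  -- the quadratic-form function
  have hgint1 : ∀ i : Fin M, IntegrableOn
      (fun t => d i * (y i t * u i t - y i t * v i t - (γ i)⁻¹ * (y i t) ^ 2))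
      (Set.Ioc 0 T) := fun i =>
    (((hyu i T).sub (hyv i T)).sub ((hy2 i T).const_mul _)).const_mul _
  have hgint : IntegrableOn
      (fun t => ∑ i, d i * (y i t * u i t - y i t * v i t - (γ i)⁻¹ * (y i t) ^ 2))
      (Set.Ioc 0 T) :=
    integrable_finset_sum _ fun i _ => hgint1 i
  have hEsum : ∀ i t, ∑ j, E i j * y j t
      = (∑ j, A i j * y j t) - (γ i)⁻¹ * y i t := by
    intro i t
    rw [hE]
    simp only [Matrix.sub_apply, Matrix.diagonal_apply, sub_mul, Finset.sum_sub_distrib]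
    congr 1
    simp [ite_mul, Finset.sum_ite_eq]
  have hpt : ∀ t, ∑ i, d i * (y i t * u i t - y i t * v i t - (γ i)⁻¹ * (y i t) ^ 2)
      ≤ -α * ∑ i, (y i t) ^ 2 := by
    intro t
    have hid : ∑ i, d i * (y i t * u i t - y i t * v i t - (γ i)⁻¹ * (y i t) ^ 2)
        = (fun i => y i t) ⬝ᵥ B.mulVec (fun i => y i t) := by
      simp only [dotProduct, Matrix.mulVec]
      refine Finset.sum_congr rfl fun i _ => ?_
      have : ∑ j, B i j * y j t = d i * ((∑ j, A i j * y j t) - (γ i)⁻¹ * y i t) := by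
        rw [← hEsum i t, Finset.mul_sum]
        exact Finset.sum_congr rfl fun j _ => by rw [hBapp]; ring
      rw [this, hu i t]
      ring
    rw [hid]
    exact hQ _
  have hsqint : IntegrableOn (fun t => ∑ i, (y i t) ^ 2) (Set.Ioc 0 T) :=
    integrable_finset_sum _ fun i _ => hy2 i T
  -- integrate the pointwise bound
  have hint1 : (∫ t in Set.Ioc 0 T,
        ∑ i, d i * (y i t * u i t - y i t * v i t - (γ i)⁻¹ * (y i t) ^ 2))
      ≤ -α * ∑ i, a i := by
    have h1 := integral_mono hgint (hsqint.const_mul (-α)) hpt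
    have h2 : (∫ t in Set.Ioc 0 T, -α * ∑ i, (y i t) ^ 2)
        = -α * ∑ i, a i := by
      rw [MeasureTheory.integral_const_mul, integral_finset_sum _ fun i _ => hy2 i T]
    linarith [h1, h2 ▸ h1]
  have hint2 : (∫ t in Set.Ioc 0 T,
        ∑ i, d i * (y i t * u i t - y i t * v i t - (γ i)⁻¹ * (y i t) ^ 2))
      = ∑ i, d i * ((∫ t in Set.Ioc 0 T, y i t * u i t) - b i - (γ i)⁻¹ * a i) := by
    rw [integral_finset_sum _ fun i _ => hgint1 i]
    refine Finset.sum_congr rfl fun i _ => ?_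
    have hsub1 : IntegrableOn (fun t => y i t * u i t - y i t * v i t) (Set.Ioc 0 T) :=
      (hyu i T).sub (hyv i T)
    have hsub2 : IntegrableOn (fun t => (γ i)⁻¹ * (y i t) ^ 2) (Set.Ioc 0 T) :=
      (hy2 i T).const_mul _
    rw [MeasureTheory.integral_const_mul, integral_sub hsub1 hsub2,
      integral_sub (hyu i T) (hyv i T), MeasureTheory.integral_const_mul]
  have hkey : α * ∑ i, a i ≤ ∑ i, d i * b i := by
    have hterm : ∀ i, d i * (-(b i))
        ≤ d i * ((∫ t in Set.Ioc 0 T, y i t * u i t) - b i - (γ i)⁻¹ * a i) := by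
      intro i
      have hp := hpass i T hT
      have h1 : (γ i)⁻¹ * a i ≤ ∫ t in Set.Ioc 0 T, y i t * u i t := by
        rw [inv_mul_le_iff₀ (hγ i)]
        exact hp
      have := (hd i).le
      nlinarith [h1, (hd i).le]
    have hs : ∑ i, d i * (-(b i))
        ≤ ∑ i, d i * ((∫ t in Set.Ioc 0 T, y i t * u i t) - b i - (γ i)⁻¹ * a i) :=
      Finset.sum_le_sum fun i _ => hterm i
    have hneg : ∑ i, d i * (-(b i)) = -∑ i, d i * b i := by
      simp [mul_neg, Finset.sum_neg_distrib]
    rw [hneg, ← hint2] at hs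
    linarith [hint1, hs]
  -- Cauchy–Schwarz bounds
  have hCS : ∀ i, |b i| ≤ Real.sqrt (a i) * Real.sqrt (c i) := by
    intro i
    simpa [ha', hb', hc'] using abs_integral_mul_le (hy2 i T) (hv2 i T) (hyv i T)
  have hstep2 : ∑ i, d i * b i
      ≤ D0 * (Real.sqrt (∑ i, a i) * Real.sqrt (∑ i, c i)) := by
    have h1 : ∑ i, d i * b i ≤ ∑ i, D0 * (Real.sqrt (a i) * Real.sqrt (c i)) := by
      refine Finset.sum_le_sum fun i _ => ?_
      have hb1 : b i ≤ |b i| := le_abs_self _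
      have := hCS i
      nlinarith [hdle i, hd i, abs_nonneg (b i), Real.sqrt_nonneg (a i),
        Real.sqrt_nonneg (c i), hD0pos]
    have h2 : ∑ i, Real.sqrt (a i) * Real.sqrt (c i)
        ≤ Real.sqrt (∑ i, a i) * Real.sqrt (∑ i, c i) :=
      Real.sum_sqrt_mul_sqrt_le _ haN hcN
    calc ∑ i, d i * b i ≤ ∑ i, D0 * (Real.sqrt (a i) * Real.sqrt (c i)) := h1
      _ = D0 * ∑ i, Real.sqrt (a i) * Real.sqrt (c i) := by rw [Finset.mul_sum]
      _ ≤ D0 * (Real.sqrt (∑ i, a i) * Real.sqrt (∑ i, c i)) := by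
          exact mul_le_mul_of_nonneg_left h2 hD0pos.le
  -- conclude
  have hYint : (∫ t in Set.Ioc 0 T, ∑ i, (y i t) ^ 2) = ∑ i, a i :=
    integral_finset_sum _ fun i _ => hy2 i T
  have hVint : (∫ t in Set.Ioc 0 T, ∑ i, (v i t) ^ 2) = ∑ i, c i :=
    integral_finset_sum _ fun i _ => hv2 i T
  rw [hYint, hVint]
  set Y := Real.sqrt (∑ i, a i) with hY'
  set V := Real.sqrt (∑ i, c i) with hV'
  have hY2 : Y ^ 2 = ∑ i, a i := Real.sq_sqrt (Finset.sum_nonneg fun i _ => haN i)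
  have hYn : 0 ≤ Y := Real.sqrt_nonneg _
  have hVn : 0 ≤ V := Real.sqrt_nonneg _
  have hmain : α * Y ^ 2 ≤ D0 * (Y * V) := by
    rw [hY2]
    linarith [hkey, hstep2]
  rcases eq_or_lt_of_le hYn with h0 | h0
  · rw [← h0]; positivity
  · rw [div_mul_eq_mul_div, le_div_iff₀ hα]
    nlinarith [hmain, h0]
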